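/- arXiv:2211.04540 — 2 statements merged into one kernel-verified Lean document; each statement's English description precedes it below -/
import Mathlib

section
/- Let N_T, N_R, M ∈ ℕ with M ≥ 1, let σ² > 0, let 0 ≤ η ≤ 1, and let γ_1, …, γ_M be nonnegative reals. Let p_1, …, p_M ∈ ℂ^{N_R} with p_1 a unit vector (p_1^H p_1 = 1), and let f_R, q_1, …, q_M ∈ ℂ^{N_T} be an orthonormal family (pairwise orthogonal, each of unit norm). Define the channel H = ∑_{m=1}^{M} √γ_m · p_m q_m^H ∈ ℂ^{N_R × N_T}, the analog beamformer F_RF = [f_R, q_1] ∈ ℂ^{N_T × 2}, and the baseband beamformer F_BB = diag(1−η, η) ∈ ℂ^{2 × 2}. Then the mutual information M = log₂( det( I_{N_R} + (1/σ²)·H F_RF F_BB F_BB^H F_RF^H H^H ) ) satisfies M = log₂( 1 + η²γ₁/σ² ). -/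
open Matrix

/-- Finite-dimensional, orthonormal-steering form of Proposition 1: for the
mmWave channel `H = ∑_m √γ_m · p_m q_mᴴ`, analog beamformer `F_RF = [f_R, q_1]`
with `(f_R, q_1, …, q_M)` orthonormal, and baseband beamformer
`F_BB = diag(1−η, η)`, the mutual information
`log₂ det(I + (1/σ²)·H F_RF F_BB F_BBᴴ F_RFᴴ Hᴴ)` equals `log₂(1 + η²γ₁/σ²)`. -/
theorem mmWave_ISAC_mutual_information
    (NT NR M : ℕ) (hM : 1 ≤ M) (σ2 : ℝ) (hσ : 0 < σ2)
    (η : ℝ) (hη0 : 0 ≤ η) (hη1 : η ≤ 1)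
    (γ : Fin M → ℝ) (hγ : ∀ m, 0 ≤ γ m)
    (p : Fin M → (Fin NR → ℂ))
    (hp1 : ∑ i : Fin NR, star (p ⟨0, hM⟩ i) * p ⟨0, hM⟩ i = 1)
    (fR : Fin NT → ℂ) (q : Fin M → (Fin NT → ℂ))
    (hfR : ∑ j : Fin NT, star (fR j) * fR j = 1)
    (hq : ∀ m k : Fin M,
      ∑ j : Fin NT, star (q m j) * q k j = if m = k then 1 else 0)
    (hfRq : ∀ m : Fin M, ∑ j : Fin NT, star (fR j) * q m j = 0)
    (H : Matrix (Fin NR) (Fin NT) ℂ)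
    (hH : H = ∑ m : Fin M,
      (Real.sqrt (γ m) : ℂ) • Matrix.vecMulVec (p m) (fun j => star (q m j)))
    (FRF : Matrix (Fin NT) (Fin 2) ℂ)
    (hFRF : FRF = Matrix.of fun j k => if k = 0 then fR j else q ⟨0, hM⟩ j)
    (FBB : Matrix (Fin 2) (Fin 2) ℂ)
    (hFBB : FBB = Matrix.diagonal ![((1 - η : ℝ) : ℂ), (η : ℂ)]) :
    Real.logb 2
        (Matrix.det (1 + ((σ2 : ℂ))⁻¹ • (H * FRF * FBB * FBBᴴ * FRFᴴ * Hᴴ))).re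
      = Real.logb 2 (1 + η ^ 2 * γ ⟨0, hM⟩ / σ2) := by

  set γ1 := γ ⟨0, hM⟩ with hγ1def
  set p1 := p ⟨0, hM⟩ with hp1def
  have hγ1 : (0:ℝ) ≤ γ1 := hγ _
  have hqfR : ∀ m, ∑ j : Fin NT, (starRingEnd ℂ) (q m j) * fR j = 0 := by
    intro m
    have := congrArg star (hfRq m)
    simpa [star_sum, star_mul', mul_comm, RCLike.star_def] using this
  -- Step 1: H * FRF
  have hA : H * FRF = Matrix.vecMulVec ((Real.sqrt γ1 : ℂ) • p1) ![0, 1] := by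
    subst hH hFRF
    ext i k
    simp only [Matrix.mul_apply, Matrix.sum_apply, Matrix.smul_apply,
      Matrix.vecMulVec_apply, Matrix.of_apply, smul_eq_mul, Finset.sum_mul]
    rw [Finset.sum_comm]
    have : ∀ m : Fin M, ∑ j : Fin NT,
        (Real.sqrt (γ m) : ℂ) * (p m i * star (q m j)) *
          (if k = 0 then fR j else q ⟨0, hM⟩ j)
        = (Real.sqrt (γ m) : ℂ) * p m i *
          ∑ j : Fin NT, star (q m j) * (if k = 0 then fR j else q ⟨0, hM⟩ j) := by
      intro m
      rw [Finset.mul_sum]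
      congr 1; ext j; ring
    rw [Finset.sum_congr rfl fun m _ => this m]
    rcases Fin.exists_fin_two.mp ⟨k, rfl⟩ with h | h <;> subst h
    · simp only [RCLike.star_def]
      simp [hqfR]
    · have : ∀ m : Fin M, ∑ j : Fin NT, star (q m j) * q ⟨0, hM⟩ j
          = if m = ⟨0, hM⟩ then (1:ℂ) else 0 := fun m => hq m ⟨0, hM⟩
      simp only [Fin.one_eq_zero_iff, OfNat.ofNat_ne_one, if_false, this,
        mul_ite, mul_one, mul_zero]
      simp [Finset.sum_ite_eq', Matrix.cons_val_one, Matrix.head_cons]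
      rfl
  -- Step 2: multiply by FBB
  have hB : H * FRF * FBB
      = Matrix.vecMulVec (((η : ℂ) * (Real.sqrt γ1 : ℂ)) • p1) ![0, 1] := by
    subst hFBB
    rw [hA]
    ext i k
    rcases Fin.exists_fin_two.mp ⟨k, rfl⟩ with h | h <;> subst h <;>
      simp [Matrix.mul_apply, Matrix.vecMulVec_apply, Fin.sum_univ_two,
        Matrix.diagonal, mul_comm, mul_left_comm]
  -- Step 3: the full product
  have hc : (0:ℝ) ≤ η ^ 2 * γ1 / σ2 := by positivity
  have key : (1 : Matrix (Fin NR) (Fin NR) ℂ) + ((σ2 : ℂ))⁻¹ • (H * FRF * FBB * FBBᴴ * FRFᴴ * Hᴴ)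
      = 1 + Matrix.replicateCol (Fin 1) (((η ^ 2 * γ1 / σ2 : ℝ) : ℂ) • p1)
          * Matrix.replicateRow (Fin 1) (fun i => star (p1 i)) := by
    congr 1
    have heq : H * FRF * FBB * FBBᴴ * FRFᴴ * Hᴴ = (H * FRF * FBB) * (H * FRF * FBB)ᴴ := by
      simp only [Matrix.conjTranspose_mul, Matrix.mul_assoc]
    rw [heq, hB]
    ext i i'
    simp only [Matrix.smul_apply, Matrix.mul_apply, Matrix.conjTranspose_apply,
      Matrix.vecMulVec_apply, Matrix.replicateCol_apply, Matrix.replicateRow_apply,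
      Pi.smul_apply, smul_eq_mul, Fin.sum_univ_two, Finset.univ_unique,
      Finset.sum_singleton]
    simp only [Matrix.cons_val_zero, Matrix.cons_val_one, Matrix.head_cons,
      mul_zero, zero_mul, star_zero, mul_one, one_mul, zero_add, star_mul', star_smul]
    have hsq : (Real.sqrt γ1 : ℂ) * (Real.sqrt γ1 : ℂ) = (γ1 : ℂ) := by
      rw [← Complex.ofReal_mul, Real.mul_self_sqrt hγ1]
    push_cast
    simp only [RCLike.star_def, Complex.conj_ofReal]
    rw [← hsq]
    ring
  rw [key]
  erw [Matrix.det_one_add_replicateCol_mul_replicateRow (ι := Fin 1)]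
  have hdot : (fun i => star (p1 i)) ⬝ᵥ (((η ^ 2 * γ1 / σ2 : ℝ) : ℂ) • p1)
      = ((η ^ 2 * γ1 / σ2 : ℝ) : ℂ) := by
    simp only [dotProduct, Pi.smul_apply, smul_eq_mul]
    rw [show ∀ (f : Fin NR → ℂ), (∑ i, star (p1 i) * (((η ^ 2 * γ1 / σ2 : ℝ) : ℂ) * f i)) = ((η ^ 2 * γ1 / σ2 : ℝ) : ℂ) * ∑ i, star (p1 i) * f i from fun f => by rw [Finset.mul_sum]; congr 1; ext i; ring]
    rw [hp1]
    ring
  rw [hdot, show ((1:ℂ) + ((η ^ 2 * γ1 / σ2 : ℝ) : ℂ)).re = 1 + η ^ 2 * γ1 / σ2 by rw [Complex.add_re, Complex.one_re, Complex.ofReal_re]]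
end

section
/- Let N_R, M ∈ ℕ with M ≥ 1, let σ² > 0, let 0 ≤ η ≤ 1, and let γ_1, …, γ_M be nonnegative reals. Let p_1, …, p_M ∈ ℂ^{N_R} with p_1 a unit vector, and let Φ, θ_1, …, θ_M ∈ ℝ be angles such that for any two distinct members α ≠ β of the list (Φ, θ_1, …, θ_M), sin α − sin β is not an even integer. For each N ∈ ℕ define the ULA steering vector a_N(θ) ∈ ℂ^N with n-th entry (1/√N)·exp(−iπ(n−1)·sin θ); define the channel H_N = ∑_{m=1}^{M} √γ_m · p_m a_N(θ_m)^H ∈ ℂ^{N_R × N}, the analog beamformer F_RF,N = [a_N(Φ), a_N(θ_1)] ∈ ℂ^{N × 2}, and the baseband beamformer F_BB = diag(1−η, η). Then the mutual information M_N = log₂( det( I_{N_R} + (1/σ²)·H_N F_RF,N F_BB F_BB^H F_RF,N^H H_N^H ) ) converges to log₂( 1 + η²γ₁/σ² ) as N → ∞. -/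
open Matrix Filter Topology

/-- The ULA steering vector with half-wavelength spacing: `n`-th entry
`(1/√N) · exp(−iπ n · sin θ)` for `n = 0, …, N−1` (0-indexed version of
`n = 1, …, N`). -/
noncomputable def steer (N : ℕ) (θ : ℝ) : Fin N → ℂ := fun n =>
  (1 / Real.sqrt N : ℝ) * Complex.exp (-(Complex.I * Real.pi * (n : ℕ) * Real.sin θ))

noncomputable def corr (N : ℕ) (α β : ℝ) : ℂ :=
  ∑ j : Fin N, star (steer N α j) * steer N β j

lemma corr_eq (N : ℕ) (α β : ℝ) :
    corr N α β = (N : ℂ)⁻¹ * ∑ n ∈ Finset.range N,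
      (Complex.exp (Complex.I * (Real.pi : ℂ) * ((Real.sin α : ℂ) - (Real.sin β : ℂ)))) ^ n := by
  have key : ∀ j : Fin N, star (steer N α j) * steer N β j =
      (N : ℂ)⁻¹ * (Complex.exp (Complex.I * (Real.pi : ℂ) *
        ((Real.sin α : ℂ) - (Real.sin β : ℂ)))) ^ (j : ℕ) := by
    intro j
    unfold steer
    have h1 : star (((1 / Real.sqrt N : ℝ) : ℂ) *
        Complex.exp (-(Complex.I * Real.pi * (j:ℕ) * Real.sin α))) =
        ((1 / Real.sqrt N : ℝ) : ℂ) * Complex.exp (Complex.I * Real.pi * (j:ℕ) * Real.sin α) := by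
      rw [Complex.star_def, _root_.map_mul, ← Complex.exp_conj, map_neg, _root_.map_mul,
        _root_.map_mul, _root_.map_mul, Complex.conj_I, Complex.conj_ofReal, Complex.conj_ofReal, Complex.conj_ofReal,
        Complex.conj_natCast]
      ring_nf
    rw [h1]
    have h2 : Complex.exp (Complex.I * Real.pi * (j:ℕ) * Real.sin α) *
        Complex.exp (-(Complex.I * Real.pi * (j:ℕ) * Real.sin β)) =
        (Complex.exp (Complex.I * (Real.pi : ℂ) *
          ((Real.sin α : ℂ) - (Real.sin β : ℂ)))) ^ (j:ℕ) := by
      rw [← Complex.exp_add, ← Complex.exp_nat_mul]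
      congr 1
      ring
    have h3 : (((1 / Real.sqrt N : ℝ) : ℂ)) * (((1 / Real.sqrt N : ℝ) : ℂ)) = (N : ℂ)⁻¹ := by
      rw [← Complex.ofReal_mul]
      have : (1 / Real.sqrt N) * (1 / Real.sqrt N) = (N : ℝ)⁻¹ := by
        rw [div_mul_div_comm, Real.mul_self_sqrt (Nat.cast_nonneg N)]
        simp
      rw [this]
      simp
    calc ((1 / Real.sqrt N : ℝ) : ℂ) * Complex.exp (Complex.I * Real.pi * (j:ℕ) * Real.sin α) *
        (((1 / Real.sqrt N : ℝ) : ℂ) * Complex.exp (-(Complex.I * Real.pi * (j:ℕ) * Real.sin β)))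
        = (((1 / Real.sqrt N : ℝ) : ℂ) * ((1 / Real.sqrt N : ℝ) : ℂ)) *
          (Complex.exp (Complex.I * Real.pi * (j:ℕ) * Real.sin α) *
           Complex.exp (-(Complex.I * Real.pi * (j:ℕ) * Real.sin β))) := by ring
      _ = _ := by rw [h2, h3]
  calc corr N α β = ∑ j : Fin N, (N : ℂ)⁻¹ * (Complex.exp (Complex.I * (Real.pi : ℂ) *
        ((Real.sin α : ℂ) - (Real.sin β : ℂ)))) ^ (j : ℕ) :=
        Finset.sum_congr rfl fun j _ => key j
    _ = ∑ n ∈ Finset.range N, (N : ℂ)⁻¹ * (Complex.exp (Complex.I * (Real.pi : ℂ) *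
        ((Real.sin α : ℂ) - (Real.sin β : ℂ)))) ^ n :=
        Fin.sum_univ_eq_sum_range (fun n => (N : ℂ)⁻¹ * (Complex.exp (Complex.I * (Real.pi : ℂ) *
        ((Real.sin α : ℂ) - (Real.sin β : ℂ)))) ^ n) N
    _ = _ := by rw [Finset.mul_sum]

lemma z_ne_one {t : ℝ} (ht : ¬ ∃ k : ℤ, t = 2 * k) :
    Complex.exp (Complex.I * (Real.pi : ℂ) * (t : ℂ)) ≠ 1 := by
  intro h
  rw [Complex.exp_eq_one_iff] at h
  obtain ⟨n, hn⟩ := h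
  apply ht
  refine ⟨n, ?_⟩
  have hI : (Complex.I * (Real.pi : ℂ)) ≠ 0 := by
    simp [Complex.I_ne_zero, Complex.ofReal_ne_zero, Real.pi_ne_zero]
  have h2 : (Complex.I * (Real.pi : ℂ)) * t = (Complex.I * (Real.pi : ℂ)) * (2 * n) := by
    rw [hn]; ring
  have := mul_left_cancel₀ hI h2
  exact_mod_cast this

lemma corr_tendsto_zero {α β : ℝ} (h : ¬ ∃ k : ℤ, Real.sin α - Real.sin β = 2 * k) :
    Tendsto (fun N => corr N α β) atTop (𝓝 0) := by
  set z := Complex.exp (Complex.I * (Real.pi : ℂ) * ((Real.sin α : ℂ) - (Real.sin β : ℂ))) with hzdef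
  have hz : z ≠ 1 := by
    have := z_ne_one h
    rw [Complex.ofReal_sub] at this
    exact this
  have hzpos : 0 < ‖z - 1‖ := by rwa [norm_pos_iff, sub_ne_zero]
  have habs : ‖z‖ = 1 := by
    rw [hzdef, Complex.norm_exp]
    norm_num [Complex.mul_re]
  rw [tendsto_zero_iff_norm_tendsto_zero]
  apply squeeze_zero (g := fun N : ℕ => 2 / ‖z - 1‖ * (1 / N)) (fun n => norm_nonneg _)
  · intro N
    rw [corr_eq, ← hzdef, geom_sum_eq hz, norm_mul, norm_div]
    have h1 : ‖z ^ N - 1‖ ≤ 2 := by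
      calc ‖z ^ N - 1‖ ≤ ‖z ^ N‖ + ‖(1:ℂ)‖ := norm_sub_le _ _
        _ = 2 := by rw [norm_pow, habs]; norm_num
    have h2 : ‖((N:ℂ))⁻¹‖ = 1 / N := by simp [norm_inv]
    rw [h2]
    rw [mul_comm (2 / ‖z - 1‖)]
    gcongr
  · simpa using (tendsto_one_div_atTop_nhds_zero_nat.const_mul (2 / ‖z - 1‖))

lemma corr_tendsto_one {α β : ℝ} (h : Real.sin α = Real.sin β) :
    Tendsto (fun N => corr N α β) atTop (𝓝 1) := by
  have heq : (fun _ : ℕ => (1:ℂ)) =ᶠ[atTop] fun N => corr N α β := by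
    filter_upwards [eventually_ge_atTop 1] with N hN
    have hs : (Real.sin α : ℂ) = (Real.sin β : ℂ) := Complex.ofReal_inj.mpr h
    have hN0 : (N : ℂ) ≠ 0 := Nat.cast_ne_zero.mpr (by omega)
    rw [corr_eq, hs, sub_self, mul_zero, Complex.exp_zero]
    simp [hN0]
  exact Tendsto.congr' heq tendsto_const_nhds

/-- Proposition 1 of the paper: in the massive antenna regime `N → ∞`, the mutual
information of the conventional mmWave-ISAC system with channel
`H_N = ∑_m √γ_m · p_m a_N(θ_m)ᴴ`, analog beamformer `F_RF,N = [a_N(Φ), a_N(θ_1)]`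
and baseband beamformer `F_BB = diag(1−η, η)` converges to `log₂(1 + η²γ₁/σ²)`. -/
theorem mmWave_ISAC_asymptotic_mutual_information
    (NR M : ℕ) (hM : 1 ≤ M) (σ2 : ℝ) (hσ : 0 < σ2)
    (η : ℝ) (hη0 : 0 ≤ η) (hη1 : η ≤ 1)
    (γ : Fin M → ℝ) (hγ : ∀ m, 0 ≤ γ m)
    (p : Fin M → (Fin NR → ℂ))
    (hp1 : ∑ i : Fin NR, star (p ⟨0, hM⟩ i) * p ⟨0, hM⟩ i = 1)
    (Φ : ℝ) (θ : Fin M → ℝ)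
    (hΦθ : ∀ m : Fin M, ¬ ∃ k : ℤ, Real.sin Φ - Real.sin (θ m) = 2 * k)
    (hθθ : ∀ m k : Fin M, m ≠ k →
      ¬ ∃ j : ℤ, Real.sin (θ m) - Real.sin (θ k) = 2 * j)
    (H : (N : ℕ) → Matrix (Fin NR) (Fin N) ℂ)
    (hH : ∀ N : ℕ, H N = ∑ m : Fin M,
      (Real.sqrt (γ m) : ℂ) • Matrix.vecMulVec (p m) (fun j => star (steer N (θ m) j)))
    (FRF : (N : ℕ) → Matrix (Fin N) (Fin 2) ℂ)
    (hFRF : ∀ N : ℕ, FRF N =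
      Matrix.of fun j k => if k = 0 then steer N Φ j else steer N (θ ⟨0, hM⟩) j)
    (FBB : Matrix (Fin 2) (Fin 2) ℂ)
    (hFBB : FBB = Matrix.diagonal ![((1 - η : ℝ) : ℂ), (η : ℂ)]) :
    Tendsto
      (fun N : ℕ => Real.logb 2
        (Matrix.det
          (1 + ((σ2 : ℂ))⁻¹ •
            (H N * FRF N * FBB * FBBᴴ * (FRF N)ᴴ * (H N)ᴴ))).re)
      atTop (𝓝 (Real.logb 2 (1 + η ^ 2 * γ ⟨0, hM⟩ / σ2))) := by
  classical
  set m0 : Fin M := ⟨0, hM⟩ with hm0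
  set ψ : Fin 2 → ℝ := ![Φ, θ m0] with hψ
  set d : Fin 2 → ℂ := ![((1 - η : ℝ) : ℂ), (η : ℂ)] with hd
  set G : (N : ℕ) → Matrix (Fin NR) (Fin 2) ℂ := fun N => H N * FRF N * FBB with hG
  -- entrywise formula for G
  have Gentry : ∀ (N : ℕ) (i : Fin NR) (l : Fin 2),
      G N i l = d l * ∑ m : Fin M, (Real.sqrt (γ m) : ℂ) * p m i * corr N (θ m) (ψ l) := by
    intro N i l
    have hFcol : ∀ j : Fin N, FRF N j l = steer N (ψ l) j := by
      intro j
      rw [hFRF]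
      fin_cases l <;> simp [hψ]
    have hHF : (H N * FRF N) i l
        = ∑ m : Fin M, (Real.sqrt (γ m) : ℂ) * p m i * corr N (θ m) (ψ l) := by
      rw [Matrix.mul_apply]
      simp only [hH, Matrix.sum_apply, Matrix.smul_apply, Matrix.vecMulVec_apply, smul_eq_mul]
      simp only [Finset.sum_mul]
      rw [Finset.sum_comm]
      refine Finset.sum_congr rfl fun m _ => ?_
      rw [corr, Finset.mul_sum]
      refine Finset.sum_congr rfl fun j _ => ?_
      rw [hFcol j]
      ring
    have : G N i l = (H N * FRF N) i l * (![((1 - η : ℝ) : ℂ), (η : ℂ)]) l := by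
      rw [hG, hFBB]
      exact Matrix.mul_diagonal _ _ _ _
    rw [this, hHF, hd]
    ring
  -- limits of correlations
  set slim : Fin 2 → Fin M → ℂ := fun l m => if l ≠ 0 ∧ m = m0 then 1 else 0 with hslim
  have corr_lim : ∀ (l : Fin 2) (m : Fin M),
      Tendsto (fun N => corr N (θ m) (ψ l)) atTop (𝓝 (slim l m)) := by
    intro l m
    fin_cases l
    · have hne : ¬ ∃ k : ℤ, Real.sin (θ m) - Real.sin Φ = 2 * k := by
        rintro ⟨k, hk⟩
        exact hΦθ m ⟨-k, by push_cast; linarith⟩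
      simpa [hψ, hslim] using corr_tendsto_zero hne
    · by_cases hm : m = m0
      · subst hm
        simpa [hψ, hslim] using corr_tendsto_one (rfl : Real.sin (θ m0) = Real.sin (θ m0))
      · have hne : ¬ ∃ k : ℤ, Real.sin (θ m) - Real.sin (θ m0) = 2 * k := hθθ m m0 hm
        simpa [hψ, hslim, hm] using corr_tendsto_zero hne
  -- limit columns
  set c : Fin 2 → Fin NR → ℂ :=
    fun l i => d l * ∑ m : Fin M, (Real.sqrt (γ m) : ℂ) * p m i * slim l m with hc
  have hGik : ∀ (i : Fin NR) (l : Fin 2),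
      Tendsto (fun N => G N i l) atTop (𝓝 (c l i)) := by
    intro i l
    simp only [Gentry, hc]
    exact tendsto_const_nhds.mul
      (tendsto_finset_sum _ fun m _ => tendsto_const_nhds.mul (corr_lim l m))
  set L0 : Matrix (Fin 2) (Fin 2) ℂ :=
    Matrix.of fun k l => ∑ i : Fin NR, star (c k i) * c l i with hL0
  have hWtend : Tendsto (fun N => (G N)ᴴ * G N) atTop (𝓝 L0) := by
    refine tendsto_pi_nhds.mpr ?_
    intro k
    rw [tendsto_pi_nhds]
    intro l
    have hWe : ∀ N, ((G N)ᴴ * G N) k l = ∑ i : Fin NR, star (G N i k) * G N i l := by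
      intro N
      simp [Matrix.mul_apply, Matrix.conjTranspose_apply]
    simp only [hWe, hL0, Matrix.of_apply]
    exact tendsto_finset_sum _ fun i _ => ((hGik i k).star.mul (hGik i l))
  -- evaluate the limit matrix
  have hc0 : ∀ i : Fin NR, c 0 i = 0 := by
    intro i
    simp [hc, hslim]
  have hc1 : ∀ i : Fin NR, c 1 i = (η : ℂ) * ((Real.sqrt (γ m0) : ℂ) * p m0 i) := by
    intro i
    rw [hc]
    have : ∀ m : Fin M, slim 1 m = if m = m0 then 1 else 0 := by
      intro m; simp [hslim]
    simp only [this, mul_ite, mul_one, mul_zero]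
    rw [Finset.sum_ite_eq' Finset.univ m0 (fun m => (Real.sqrt (γ m) : ℂ) * p m i)]
    simp [hd]
  have hL11 : L0 1 1 = ((η ^ 2 * γ m0 : ℝ) : ℂ) := by
    rw [hL0]
    simp only [Matrix.of_apply, hc1]
    have : ∀ i : Fin NR, star ((η : ℂ) * ((Real.sqrt (γ m0) : ℂ) * p m0 i)) *
        ((η : ℂ) * ((Real.sqrt (γ m0) : ℂ) * p m0 i))
        = ((η ^ 2 * γ m0 : ℝ) : ℂ) * (star (p m0 i) * p m0 i) := by
      intro i
      simp only [star_mul', Complex.star_def, Complex.conj_ofReal]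
      have hsq : ((Real.sqrt (γ m0) : ℂ)) * ((Real.sqrt (γ m0) : ℂ)) = ((γ m0 : ℝ) : ℂ) := by
        rw [← Complex.ofReal_mul, Real.mul_self_sqrt (hγ m0)]
      rw [show ((η ^ 2 * γ m0 : ℝ) : ℂ) = (η : ℂ) * (η : ℂ) * ((γ m0 : ℝ) : ℂ) from by
        push_cast; ring]
      rw [← hsq]
      ring
    simp only [this]
    rw [← Finset.mul_sum, hp1, mul_one]
  have hL00 : L0 0 0 = 0 := by simp [hL0, hc0]
  have hL01 : L0 0 1 = 0 := by simp [hL0, hc0]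
  have hL10 : L0 1 0 = 0 := by simp [hL0, hc0]
  -- continuity of the functional
  have hcont : Continuous (fun A : Matrix (Fin 2) (Fin 2) ℂ =>
      ((1 + (σ2 : ℂ)⁻¹ • A).det).re) :=
    Complex.continuous_re.comp (Continuous.matrix_det (Continuous.add continuous_const (continuous_const_smul _)))
  have hdet : ((1 + (σ2 : ℂ)⁻¹ • L0).det).re = 1 + η ^ 2 * γ m0 / σ2 := by
    have hM2 : (1 + (σ2 : ℂ)⁻¹ • L0)
        = !![1, 0; 0, 1 + ((η ^ 2 * γ m0 / σ2 : ℝ) : ℂ)] := by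
      ext k l
      fin_cases k <;> fin_cases l <;>
        simp [Matrix.add_apply, Matrix.smul_apply, Matrix.one_apply, hL00, hL01, hL10, hL11] <;>
        ring
    rw [hM2, Matrix.det_fin_two_of]
    have : ((1:ℂ) * (1 + ((η ^ 2 * γ m0 / σ2 : ℝ) : ℂ)) - 0 * 0)
        = ((1 + η ^ 2 * γ m0 / σ2 : ℝ) : ℂ) := by push_cast; ring
    rw [this, Complex.ofReal_re]
  have h1 : Tendsto (fun N => ((1 + (σ2 : ℂ)⁻¹ • ((G N)ᴴ * G N)).det).re)
      atTop (𝓝 (1 + η ^ 2 * γ m0 / σ2)) := by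
    have := (hcont.tendsto L0).comp hWtend
    rwa [hdet] at this
  have hpos : (0:ℝ) < 1 + η ^ 2 * γ m0 / σ2 := by
    have h0 : (0:ℝ) ≤ η ^ 2 * γ m0 / σ2 :=
      div_nonneg (mul_nonneg (sq_nonneg η) (hγ m0)) hσ.le
    linarith
  have key : ∀ N : ℕ,
      Real.logb 2 ((1 + (σ2 : ℂ)⁻¹ •
          (H N * FRF N * FBB * FBBᴴ * (FRF N)ᴴ * (H N)ᴴ)).det).re
      = Real.logb 2 ((1 + (σ2 : ℂ)⁻¹ • ((G N)ᴴ * G N)).det).re := by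
    intro N
    have hGG : H N * FRF N * FBB * FBBᴴ * (FRF N)ᴴ * (H N)ᴴ = G N * (G N)ᴴ := by
      simp only [hG]
      simp only [Matrix.conjTranspose_mul, Matrix.mul_assoc]
    rw [hGG, ← Matrix.smul_mul, Matrix.det_one_add_mul_comm, Matrix.mul_smul]
  have h3 : Tendsto (fun N : ℕ =>
      Real.logb 2 ((1 + (σ2 : ℂ)⁻¹ • ((G N)ᴴ * G N)).det).re) atTop
      (𝓝 (Real.logb 2 (1 + η ^ 2 * γ m0 / σ2))) :=
    ((Real.continuousAt_logb hpos.ne').tendsto).comp h1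
  exact h3.congr fun N => (key N).symm
end
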